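/- arXiv:1906.05068 — 4 statements merged into one kernel-verified Lean document; each statement's English description precedes it below -/
import Mathlib

section
/- Let K be a field and let x, y ∈ K∖{0,1} with x ≠ y. Then in Λ² K^×, one has (x ∧ (1-x)) - (y ∧ (1-y)) + ((y/x) ∧ (1 - y/x)) + (((1-x)/(1-y)) ∧ (1 - (1-x)/(1-y))) - (((1-x⁻¹)/(1-y⁻¹)) ∧ (1 - (1-x⁻¹)/(1-y⁻¹))) = 0, whenever all the arguments y/x, (1-x)/(1-y), (1-x⁻¹)/(1-y⁻¹) lie in K∖{0,1}. -/
/-- The wedge `f ∧ g` of two units of a field `K`, as an element of the exterior algebra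
(over `ℤ`) of the multiplicative group `K^×` written additively; its degree-two component
is the exterior square `Λ² K^×`. -/
noncomputable def wedge {K : Type*} [Field K] (f g : Kˣ) :
    ExteriorAlgebra ℤ (Additive Kˣ) :=
  ExteriorAlgebra.ι ℤ (Additive.ofMul f) * ExteriorAlgebra.ι ℤ (Additive.ofMul g)

lemma wedge_mul_left {K : Type*} [Field K] (f g h : Kˣ) :
    wedge (f * g) h = wedge f h + wedge g h := by
  unfold wedge
  rw [show Additive.ofMul (f * g) = Additive.ofMul f + Additive.ofMul g from rfl,
    map_add, add_mul]

lemma wedge_mul_right {K : Type*} [Field K] (f g h : Kˣ) :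
    wedge f (g * h) = wedge f g + wedge f h := by
  unfold wedge
  rw [show Additive.ofMul (g * h) = Additive.ofMul g + Additive.ofMul h from rfl,
    map_add, mul_add]

lemma wedge_inv_left {K : Type*} [Field K] (f g : Kˣ) :
    wedge f⁻¹ g = - wedge f g := by
  unfold wedge
  rw [show Additive.ofMul f⁻¹ = - Additive.ofMul f from rfl, map_neg, neg_mul]

lemma wedge_inv_right {K : Type*} [Field K] (f g : Kˣ) :
    wedge f g⁻¹ = - wedge f g := by
  unfold wedge
  rw [show Additive.ofMul g⁻¹ = - Additive.ofMul g from rfl, map_neg, mul_neg]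

lemma wedge_self {K : Type*} [Field K] (f : Kˣ) : wedge f f = 0 :=
  ExteriorAlgebra.ι_sq_zero _

lemma wedge_antisymm {K : Type*} [Field K] (f g : Kˣ) : wedge f g = - wedge g f :=
  eq_neg_of_add_eq_zero_left
    (ExteriorAlgebra.ι_add_mul_swap (Additive.ofMul f) (Additive.ofMul g))

/-- the five-term relation holds in `Λ² K^×` for the map `f ↦ f ∧ (1-f)`:
for `x ≠ y` in `K∖{0,1}` with `y/x`, `(1-x)/(1-y)` and `(1-x⁻¹)/(1-y⁻¹)` in `K∖{0,1}`,
`(x ∧ (1-x)) - (y ∧ (1-y)) + ((y/x) ∧ (1-y/x)) + (((1-x)/(1-y)) ∧ (1-(1-x)/(1-y)))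
  - (((1-x⁻¹)/(1-y⁻¹)) ∧ (1-(1-x⁻¹)/(1-y⁻¹))) = 0`. -/
theorem five_term_wedge {K : Type*} [Field K] (x y a b c : Kˣ)
    (hx1 : (x : K) ≠ 1) (hy1 : (y : K) ≠ 1) (hxy : (x : K) ≠ y)
    (ha : (a : K) = y / x) (ha1 : (a : K) ≠ 1)
    (hb : (b : K) = (1 - (x : K)) / (1 - (y : K))) (hb1 : (b : K) ≠ 1)
    (hc : (c : K) = (1 - (x : K)⁻¹) / (1 - (y : K)⁻¹)) (hc1 : (c : K) ≠ 1)
    (x' y' a' b' c' : Kˣ)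
    (hx' : (x' : K) = 1 - x) (hy' : (y' : K) = 1 - y) (ha' : (a' : K) = 1 - a)
    (hb' : (b' : K) = 1 - b) (hc' : (c' : K) = 1 - c) :
    wedge x x' - wedge y y' + wedge a a' + wedge b b' - wedge c c' = 0 := by
  have hx0 : (x : K) ≠ 0 := x.ne_zero
  have hy0 : (y : K) ≠ 0 := y.ne_zero
  have hx'0 : (1 : K) - x ≠ 0 := hx' ▸ x'.ne_zero
  have hy'0 : (1 : K) - y ≠ 0 := hy' ▸ y'.ne_zero
  have hiy : (1 : K) - (y : K)⁻¹ ≠ 0 := by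
    rw [sub_ne_zero]
    intro h
    exact hy1 (inv_eq_one.mp h.symm)
  set d : Kˣ := x * a' with hd_def
  have hd : (d : K) = (x : K) - y := by
    have : (d : K) = x * (1 - y / x) := by rw [hd_def]; push_cast [ha', ha]; ring
    rw [this]; field_simp
  have h2 : -(x : K) + x * y ≠ 0 := by
    intro h
    have h3 : (x : K) * (1 - y) = 0 := by linear_combination -h
    rcases mul_eq_zero.mp h3 with h' | h'
    · exact hx0 h'
    · exact hy'0 h'
  have ea : a = y * x⁻¹ := by ext; push_cast [ha]; field_simp
  have ea' : a' = d * x⁻¹ := by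
    ext; push_cast [hd_def, ha', ha]
    rw [mul_right_comm, mul_inv_cancel₀ hx0, one_mul]
  have eb : b = x' * y'⁻¹ := by ext; push_cast [hb, hx', hy']; field_simp
  have eb' : b' = d * y'⁻¹ := by
    ext; push_cast [hd_def, hb', hb, ha', ha, hy']; field_simp [h2]; ring
  have ec : c = x' * y * x⁻¹ * y'⁻¹ := by
    ext; push_cast [hc, hx', hy']; field_simp [h2]
    ring
  have ec' : c' = d * x⁻¹ * y'⁻¹ := by
    ext; push_cast [hd_def, hc', hc, ha', ha, hy']; field_simp [h2]
    ring
  rw [ea, ea', eb, eb', ec, ec']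
  simp only [wedge_mul_left, wedge_mul_right, wedge_inv_left, wedge_inv_right,
    wedge_self, neg_neg]
  simp only [wedge_antisymm x' x, wedge_antisymm y x, wedge_antisymm y' x]
  abel
end

section
/- Let E = ℂ/Λ be a complex elliptic curve and ℘ its Weierstrass function. For distinct points α, β ∈ E, the divisor of the function z ↦ ℘(z-α) - ℘(z-β) equals ∑_{x : 2x = α+β} [x] - 2[α] - 2[β]; in particular this function has degree 4 and its zero set is a coset of the 2-torsion subgroup E[2]. -/
open Filter Topology

/-- The lattice `⟨1, τ⟩ ⊆ ℂ`. -/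
noncomputable def lat (τ : ℂ) : AddSubgroup ℂ := AddSubgroup.closure {1, τ}

/-- `IsWeierstrassP τ ℘` says that `℘` is the Weierstrass `℘`-function of the lattice
`⟨1,τ⟩` (with junk values at lattice points): it is `⟨1,τ⟩`-periodic, even, analytic off
the lattice, and satisfies `℘(z) = z⁻² + o(z)` near `0`.  These conditions determine `℘`
uniquely off the lattice. -/
structure IsWeierstrassP (τ : ℂ) (℘ : ℂ → ℂ) : Prop where
  periodic : ∀ w ∈ lat τ, ∀ z, ℘ (z + w) = ℘ z
  even : ∀ z, ℘ (-z) = ℘ z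
  analytic : AnalyticOnNhd ℂ ℘ {z | z ∉ lat τ}
  pole : Tendsto (fun z : ℂ => (℘ z - (z ^ 2)⁻¹) / z) (𝓝[≠] 0) (𝓝 0)

lemma mem_lat_iff {τ z : ℂ} : z ∈ lat τ ↔ ∃ m n : ℤ, z = m + n * τ := by
  rw [lat, AddSubgroup.mem_closure_pair]
  constructor
  · rintro ⟨m, n, rfl⟩; exact ⟨m, n, by push_cast [zsmul_eq_mul]; ring⟩
  · rintro ⟨m, n, rfl⟩; exact ⟨m, n, by push_cast [zsmul_eq_mul]; ring⟩

lemma lat_norm {τ : ℂ} (hτ : 0 < τ.im) {z : ℂ} (hz : z ∈ lat τ) (h0 : z ≠ 0) :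
    min 1 τ.im ≤ ‖z‖ := by
  obtain ⟨m, n, rfl⟩ := mem_lat_iff.mp hz
  rcases eq_or_ne n 0 with rfl | hn
  · simp only [Int.cast_zero, zero_mul, add_zero] at h0 ⊢
    have hm : m ≠ 0 := by exact_mod_cast h0
    calc min 1 τ.im ≤ 1 := min_le_left _ _
      _ ≤ |(m:ℝ)| := by exact_mod_cast Int.one_le_abs hm
      _ = ‖(m:ℂ)‖ := by rw [Complex.norm_intCast]
  · have him : ((m:ℂ) + n * τ).im = n * τ.im := by simp
    calc min 1 τ.im ≤ τ.im := min_le_right _ _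
      _ ≤ |(n:ℝ)| * τ.im := by
          nlinarith [Int.one_le_abs hn, (abs_nonneg (n:ℝ)), hτ,
            (by exact_mod_cast Int.one_le_abs hn : (1:ℝ) ≤ |(n:ℝ)|)]
      _ = |((m:ℂ) + n * τ).im| := by rw [him, abs_mul, abs_of_pos hτ]
      _ ≤ ‖(m:ℂ) + n * τ‖ := Complex.abs_im_le_norm _

lemma lat_isClosed {τ : ℂ} (hτ : 0 < τ.im) : IsClosed (lat τ : Set ℂ) := by
  set ε := min 1 τ.im with hε
  have hε0 : 0 < ε := lt_min one_pos hτ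
  rw [← isOpen_compl_iff]
  rw [isOpen_iff_mem_nhds]
  intro z hz
  by_cases hcl : z ∈ closure (lat τ : Set ℂ)
  · -- there is a unique close lattice point w ≠ z; punch a smaller ball
    obtain ⟨w, hw, hwd⟩ := Metric.mem_closure_iff.mp hcl (ε/2) (by linarith)
    have hzw : z ≠ w := fun h => hz (h ▸ hw)
    have hd : 0 < dist z w := dist_pos.mpr hzw
    refine Filter.mem_of_superset (Metric.ball_mem_nhds z (lt_min (by linarith : (0:ℝ) < ε/2) hd)) ?_
    intro y hy
    simp only [Metric.mem_ball, lt_min_iff] at hy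
    intro hylat
    have hyw : y = w := by
      by_contra hne
      have : y - w ∈ lat τ := sub_mem hylat hw
      have h1 : ε ≤ ‖y - w‖ := lat_norm hτ this (sub_ne_zero.mpr hne)
      have : ‖y - w‖ ≤ dist y z + dist z w := by
        rw [← dist_eq_norm]; rw [dist_comm y z]; exact dist_triangle_left y w z
      linarith [hy.1, hwd, this]
    rw [hyw] at hy
    exact absurd hy.2 (by simp [dist_comm])
  · exact Filter.mem_of_superset ((isOpen_compl_iff.mpr isClosed_closure).mem_nhds hcl)
      (Set.compl_subset_compl.mpr subset_closure)

lemma lat_countable (τ : ℂ) : Set.Countable (lat τ : Set ℂ) := by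
  have : (lat τ : Set ℂ) ⊆ Set.range (fun p : ℤ × ℤ => (p.1 : ℂ) + p.2 * τ) := by
    rintro z hz
    obtain ⟨m, n, rfl⟩ := mem_lat_iff.mp hz
    exact ⟨(m, n), rfl⟩
  exact (Set.countable_range _).mono this

lemma bounded_of_elliptic {τ : ℂ} (hτ : 0 < τ.im) {f : ℂ → ℂ} (hf : Continuous f)
    (hp : ∀ w ∈ lat τ, ∀ z, f (z + w) = f z) : Bornology.IsBounded (Set.range f) := by
  set K : Set ℂ := (fun p : ℝ × ℝ => (p.1 : ℂ) + p.2 * τ) '' (Set.Icc 0 1 ×ˢ Set.Icc 0 1) with hK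
  have hKc : IsCompact K := by
    apply (isCompact_Icc.prod isCompact_Icc).image
    continuity
  have hsub : Set.range f ⊆ f '' K := by
    rintro _ ⟨z, rfl⟩
    set y : ℝ := z.im / τ.im with hy
    set x : ℝ := z.re - y * τ.re with hx
    have hzxy : z = (x:ℂ) + y * τ := by
      apply Complex.ext <;> simp [hx, hy] <;> field_simp
    set w : ℂ := (⌊x⌋ : ℂ) + (⌊y⌋ : ℂ) * τ with hw
    have hwlat : w ∈ lat τ := mem_lat_iff.mpr ⟨⌊x⌋, ⌊y⌋, rfl⟩
    have hzw : z - w ∈ K := by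
      refine ⟨(Int.fract x, Int.fract y), ⟨⟨Int.fract_nonneg x, (Int.fract_lt_one x).le⟩,
        ⟨Int.fract_nonneg y, (Int.fract_lt_one y).le⟩⟩, ?_⟩
      simp only [Int.fract]
      rw [hzxy, hw]
      push_cast
      ring
    have : f z = f (z - w) := by
      have := hp w hwlat (z - w)
      rwa [sub_add_cancel] at this
    exact ⟨z - w, hzw, this.symm⟩
  exact ((hKc.image hf).isBounded).subset hsub

lemma not_lat_half {τ : ℂ} (hτ : 0 < τ.im) (ε₁ ε₂ : ℤ) (h : ε₁ % 2 ≠ 0 ∨ ε₂ % 2 ≠ 0) :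
    ((ε₁:ℂ)/2 + (ε₂:ℂ)/2*τ) ∉ lat τ := by
  intro hmem
  obtain ⟨m, n, hmn⟩ := mem_lat_iff.mp hmem
  have him : (ε₂:ℝ)/2 * τ.im = n * τ.im := by
    have := congrArg Complex.im hmn
    simpa using this
  have hε₂ : (ε₂:ℝ) = 2*n := by
    have hne : τ.im ≠ 0 := ne_of_gt hτ
    have := mul_right_cancel₀ hne him
    linarith
  have hre : (ε₁:ℝ)/2 + (ε₂:ℝ)/2 * τ.re = m + n * τ.re := by
    have := congrArg Complex.re hmn
    simpa using this
  have hε₁ : (ε₁:ℝ) = 2*m := by rw [hε₂] at hre; linarith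
  have h2 : ε₂ = 2*n := by exact_mod_cast hε₂
  have h1 : ε₁ = 2*m := by exact_mod_cast hε₁
  rcases h with h | h <;> [skip; skip] <;> simp [h1, h2, Int.mul_emod_right] at h

lemma torsion_card {τ : ℂ} (hτ : 0 < τ.im) (s : ℂ) :
    Set.ncard {x : ℂ ⧸ lat τ | x + x = QuotientAddGroup.mk s} = 4 := by
  set σ : ℂ := s/2 with hσ
  set p : ℤ → ℤ → ℂ ⧸ lat τ := fun a b => QuotientAddGroup.mk (σ + ((a:ℂ)/2 + (b:ℂ)/2*τ)) with hp
  have hmk_add : ∀ u v : ℂ, (QuotientAddGroup.mk (u + v) : ℂ ⧸ lat τ)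
      = QuotientAddGroup.mk u + QuotientAddGroup.mk v := fun u v => rfl
  have hpne : ∀ a b a' b' : ℤ, ((a-a') % 2 ≠ 0 ∨ (b-b') % 2 ≠ 0) → p a b ≠ p a' b' := by
    intro a b a' b' h heq
    rw [hp] at heq
    simp only at heq
    rw [QuotientAddGroup.eq_iff_sub_mem] at heq
    apply not_lat_half hτ (a-a') (b-b') h
    have : (σ + ((a:ℂ)/2 + (b:ℂ)/2*τ)) - (σ + ((a':ℂ)/2 + (b':ℂ)/2*τ))
        = ((a-a':ℤ):ℂ)/2 + ((b-b':ℤ):ℂ)/2*τ := by push_cast; ring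
    rwa [this] at heq
  have hset : {x : ℂ ⧸ lat τ | x + x = QuotientAddGroup.mk s}
      = {p 0 0, p 1 0, p 0 1, p 1 1} := by
    ext x
    constructor
    · intro hx
      obtain ⟨w, rfl⟩ := QuotientAddGroup.mk_surjective x
      rw [Set.mem_setOf_eq, ← hmk_add, QuotientAddGroup.eq_iff_sub_mem] at hx
      obtain ⟨m, n, hmn⟩ := mem_lat_iff.mp hx
      have key : ∀ a b : ℤ, m % 2 = a → n % 2 = b → (QuotientAddGroup.mk w : ℂ ⧸ lat τ) = p a b := by
        intro a b ha hb
        rw [hp]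
        simp only
        rw [QuotientAddGroup.eq_iff_sub_mem]
        apply mem_lat_iff.mpr
        refine ⟨m/2, n/2, ?_⟩
        have e1 : ((m/2 : ℤ):ℂ) * 2 = (m:ℂ) - a := by
          have : (m/2 : ℤ) * 2 = m - a := by omega
          exact_mod_cast congrArg (Int.cast : ℤ → ℂ) this
        have e2 : ((n/2 : ℤ):ℂ) * 2 = (n:ℂ) - b := by
          have : (n/2 : ℤ) * 2 = n - b := by omega
          exact_mod_cast congrArg (Int.cast : ℤ → ℂ) this
        rw [hσ]
        linear_combination hmn/2 - e1/2 - e2*τ/2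
      rcases Int.emod_two_eq_zero_or_one m with hm | hm <;>
        rcases Int.emod_two_eq_zero_or_one n with hn | hn
      · exact Or.inl (key 0 0 hm hn)
      · exact Or.inr (Or.inr (Or.inl (key 0 1 hm hn)))
      · exact Or.inr (Or.inl (key 1 0 hm hn))
      · exact Or.inr (Or.inr (Or.inr (key 1 1 hm hn)))
    · intro hx
      have hmem : ∀ a b : ℤ, p a b + p a b = QuotientAddGroup.mk s := by
        intro a b
        rw [hp]
        simp only
        rw [← hmk_add, QuotientAddGroup.eq_iff_sub_mem]
        apply mem_lat_iff.mpr
        exact ⟨a, b, by rw [hσ]; ring⟩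
      rcases hx with h | h | h | h <;> rw [Set.mem_setOf_eq, h] <;> apply hmem
  rw [hset]
  have h1 : p 0 0 ≠ p 1 0 := hpne 0 0 1 0 (by norm_num)
  have h2 : p 0 0 ≠ p 0 1 := hpne 0 0 0 1 (by norm_num)
  have h3 : p 0 0 ≠ p 1 1 := hpne 0 0 1 1 (by norm_num)
  have h4 : p 1 0 ≠ p 0 1 := hpne 1 0 0 1 (by norm_num)
  have h5 : p 1 0 ≠ p 1 1 := hpne 1 0 1 1 (by norm_num)
  have h6 : p 0 1 ≠ p 1 1 := hpne 0 1 1 1 (by norm_num)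
  rw [Set.ncard_insert_of_notMem (by simp [h1, h2, h3])
      ((Set.finite_singleton _).insert _ |>.insert _),
    Set.ncard_insert_of_notMem (by simp [h4, h5]) ((Set.finite_singleton _).insert _),
    Set.ncard_insert_of_notMem (by simp [h6]) (Set.finite_singleton _),
    Set.ncard_singleton]

lemma torsion_coset {τ : ℂ} (s : ℂ) :
    ∃ x₀ : ℂ ⧸ lat τ,
      {x : ℂ ⧸ lat τ | x + x = QuotientAddGroup.mk s} =
        (fun t => x₀ + t) '' {t : ℂ ⧸ lat τ | t + t = 0} := by
  set x₀ : ℂ ⧸ lat τ := QuotientAddGroup.mk (s/2) with hx₀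
  have h2 : x₀ + x₀ = QuotientAddGroup.mk s := by
    rw [hx₀, show (QuotientAddGroup.mk (s/2) : ℂ ⧸ lat τ) + QuotientAddGroup.mk (s/2)
      = QuotientAddGroup.mk (s/2 + s/2) from rfl]
    norm_num
  refine ⟨x₀, ?_⟩
  ext x
  constructor
  · intro hx
    rw [Set.mem_setOf_eq] at hx
    refine ⟨x - x₀, ?_, by simp⟩
    rw [Set.mem_setOf_eq, show (x - x₀) + (x - x₀) = (x + x) - (x₀ + x₀) by abel, hx, h2,
      sub_self]
  · rintro ⟨t, ht, rfl⟩
    rw [Set.mem_setOf_eq] at ht ⊢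
    rw [show x₀ + t + (x₀ + t) = (x₀ + x₀) + (t + t) by abel, h2, ht, add_zero]

section WeierstrassAux
variable {τ : ℂ} {℘ : ℂ → ℂ}

lemma eventually_not_lat (hτ : 0 < τ.im) : ∀ᶠ z in 𝓝[≠] (0:ℂ), z ∉ lat τ := by
  have hε : 0 < min 1 τ.im := lt_min one_pos hτ
  filter_upwards [self_mem_nhdsWithin,
    eventually_nhdsWithin_of_eventually_nhds (Metric.ball_mem_nhds (0:ℂ) hε)] with z hz hball
  intro hlat
  have := lat_norm hτ hlat hz
  simp only [Metric.mem_ball, Complex.dist_eq, sub_zero] at hball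
  linarith

lemma compl_lat_mem_nhds (hτ : 0 < τ.im) {z : ℂ} (hz : z ∉ lat τ) :
    {w : ℂ | w ∉ lat τ} ∈ 𝓝 z :=
  (lat_isClosed hτ).isOpen_compl.mem_nhds hz

/-- The regular part of `℘` at `0`. -/
noncomputable def hP (℘ : ℂ → ℂ) : ℂ → ℂ :=
  Function.update (fun z => ℘ z - (z^2)⁻¹) 0 0

lemma hP_ne {z : ℂ} (hz : z ≠ 0) : hP ℘ z = ℘ z - (z^2)⁻¹ :=
  Function.update_of_ne hz _ _

lemma hP_zero : hP ℘ 0 = 0 := Function.update_self _ _ _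

lemma wp_eq {z : ℂ} (hz : z ≠ 0) : ℘ z = (z^2)⁻¹ + hP ℘ z := by
  rw [hP_ne hz]; ring

lemma hP_even (h℘ : IsWeierstrassP τ ℘) (z : ℂ) : hP ℘ (-z) = hP ℘ z := by
  rcases eq_or_ne z 0 with rfl | hz
  · simp
  · rw [hP_ne hz, hP_ne (neg_ne_zero.mpr hz), h℘.even]; ring_nf

lemma hP_tendsto (h℘ : IsWeierstrassP τ ℘) : Tendsto (hP ℘) (𝓝[≠] 0) (𝓝 0) := by
  have : Tendsto (fun z : ℂ => ((℘ z - (z ^ 2)⁻¹) / z) * z) (𝓝[≠] 0) (𝓝 0) := by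
    have h2 : Tendsto (fun z : ℂ => z) (𝓝[≠] (0:ℂ)) (𝓝 0) :=
      tendsto_id.mono_left nhdsWithin_le_nhds
    simpa using h℘.pole.mul h2
  apply this.congr'
  filter_upwards [self_mem_nhdsWithin] with z hz
  rw [div_mul_cancel₀ _ (by exact hz : z ≠ 0), hP_ne hz]

lemma hP_contAt (h℘ : IsWeierstrassP τ ℘) : ContinuousAt (hP ℘) 0 := by
  rw [← continuousWithinAt_compl_self]
  unfold ContinuousWithinAt
  rw [hP_zero]
  exact hP_tendsto h℘

lemma wp_diffAt (h℘ : IsWeierstrassP τ ℘) {z : ℂ} (hz : z ∉ lat τ) :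
    DifferentiableAt ℂ ℘ z := (h℘.analytic z hz).differentiableAt

lemma hP_diffAt_ne (hτ : 0 < τ.im) (h℘ : IsWeierstrassP τ ℘) {z : ℂ}
    (hz : z ≠ 0) (hz' : z ∉ lat τ) : DifferentiableAt ℂ (hP ℘) z := by
  have : DifferentiableAt ℂ (fun w => ℘ w - (w^2)⁻¹) z :=
    (wp_diffAt h℘ hz').sub ((differentiableAt_id.pow 2).inv (pow_ne_zero 2 hz))
  apply this.congr_of_eventuallyEq
  filter_upwards [isOpen_ne.mem_nhds hz] with w hw
  exact hP_ne hw

lemma hP_analyticAt (hτ : 0 < τ.im) (h℘ : IsWeierstrassP τ ℘) :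
    AnalyticAt ℂ (hP ℘) 0 := by
  apply Complex.analyticAt_of_differentiable_on_punctured_nhds_of_continuousAt
  · filter_upwards [eventually_not_lat hτ, self_mem_nhdsWithin] with z hz h0
    exact hP_diffAt_ne hτ h℘ h0 hz
  · exact hP_contAt h℘

lemma hP_hasDeriv0 (h℘ : IsWeierstrassP τ ℘) : HasDerivAt (hP ℘) 0 0 := by
  rw [hasDerivAt_iff_tendsto_slope]
  apply h℘.pole.congr'
  filter_upwards [self_mem_nhdsWithin] with z hz
  rw [slope_def_field, hP_zero, hP_ne hz]
  ring_nf

lemma wp_contAt (h℘ : IsWeierstrassP τ ℘) {z : ℂ} (hz : z ∉ lat τ) :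
    ContinuousAt ℘ z := (wp_diffAt h℘ hz).continuousAt

-- z ↦ z² ℘(z) → 1
lemma sq_wp_tendsto (h℘ : IsWeierstrassP τ ℘) :
    Tendsto (fun w : ℂ => w^2 * ℘ w) (𝓝[≠] 0) (𝓝 1) := by
  have hm : Tendsto (fun w : ℂ => 1 + w^2 * hP ℘ w) (𝓝[≠] 0) (𝓝 1) := by
    have h2 : Tendsto (fun w : ℂ => w^2) (𝓝[≠] (0:ℂ)) (𝓝 0) := by
      apply Tendsto.mono_left _ nhdsWithin_le_nhds
      simpa using (continuous_pow 2).tendsto (0:ℂ)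
    have := h2.mul (hP_tendsto h℘)
    simpa using tendsto_const_nhds.add this
  apply hm.congr'
  filter_upwards [self_mem_nhdsWithin] with w hw
  have hw' : w ≠ 0 := hw
  rw [wp_eq (℘ := ℘) hw]
  field_simp

-- z ↦ z² ℘(z+γ) → 0 for γ ∉ lat
lemma sq_wp_shift_tendsto (hτ : 0 < τ.im) (h℘ : IsWeierstrassP τ ℘) {γ : ℂ}
    (hγ : γ ∉ lat τ) :
    Tendsto (fun w : ℂ => w^2 * ℘ (w + γ)) (𝓝[≠] 0) (𝓝 0) := by
  have h2 : Tendsto (fun w : ℂ => w^2) (𝓝[≠] (0:ℂ)) (𝓝 0) := by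
    apply Tendsto.mono_left _ nhdsWithin_le_nhds
    simpa using (continuous_pow 2).tendsto (0:ℂ)
  have hc : Tendsto (fun w : ℂ => ℘ (w + γ)) (𝓝[≠] 0) (𝓝 (℘ γ)) := by
    have : Tendsto (fun w : ℂ => w + γ) (𝓝[≠] (0:ℂ)) (𝓝 γ) := by
      apply Tendsto.mono_left _ nhdsWithin_le_nhds
      simpa using (continuous_add_right γ).tendsto (0:ℂ)
    exact (wp_contAt h℘ hγ).tendsto.comp this
  simpa using h2.mul hc

lemma shift_punct_tendsto (α : ℂ) :
    Tendsto (fun z : ℂ => z - α) (𝓝[≠] α) (𝓝[≠] 0) := by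
  rw [tendsto_nhdsWithin_iff]
  constructor
  · apply Tendsto.mono_left _ nhdsWithin_le_nhds
    have : Tendsto (fun z : ℂ => z - α) (𝓝 α) (𝓝 (α - α)) :=
      (continuous_id.sub continuous_const).tendsto α
    simpa using this
  · filter_upwards [self_mem_nhdsWithin] with z hz
    simpa [sub_eq_zero] using hz

lemma double_pole_α (hτ : 0 < τ.im) (h℘ : IsWeierstrassP τ ℘) {α β : ℂ}
    (hd : α - β ∉ lat τ) :
    Tendsto (fun z => (z - α) ^ 2 * (℘ (z - α) - ℘ (z - β)))
      (𝓝[≠] α) (𝓝 1) := by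
  have key : Tendsto (fun w : ℂ => w^2 * ℘ w - w^2 * ℘ (w + (α - β))) (𝓝[≠] 0) (𝓝 1) := by
    simpa using (sq_wp_tendsto h℘).sub (sq_wp_shift_tendsto hτ h℘ hd)
  have := key.comp (shift_punct_tendsto α)
  apply this.congr
  intro z
  simp only [Function.comp_apply]
  have : z - α + (α - β) = z - β := by ring
  rw [this]
  ring

lemma no_extra_period (hτ : 0 < τ.im) (h℘ : IsWeierstrassP τ ℘) {t : ℂ}
    (ht : t ∉ lat τ)
    (hper : ∀ w, w ∉ lat τ → w + t ∉ lat τ → ℘ (w + t) = ℘ w) : False := by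
  have hnt : -t ∉ lat τ := fun h => ht (by simpa using neg_mem h)
  -- eventually along 𝓝[≠]0 : ℘ s = ℘ (-t + s)
  have hev : ∀ᶠ s in 𝓝[≠] (0:ℂ), ℘ s = ℘ (-t + s) := by
    have h1 : ∀ᶠ s in 𝓝[≠] (0:ℂ), -t + s ∉ lat τ := by
      apply eventually_nhdsWithin_of_eventually_nhds
      have hcont : Tendsto (fun s : ℂ => -t + s) (𝓝 0) (𝓝 (-t)) := by
        have : Tendsto (fun s : ℂ => -t + s) (𝓝 0) (𝓝 (-t + 0)) :=
          ((continuous_const (y := -t)).add continuous_id).tendsto (0:ℂ)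
        simpa using this
      exact hcont.eventually_mem (compl_lat_mem_nhds hτ hnt)
    filter_upwards [h1, eventually_not_lat hτ] with s h1 h2
    have h := hper (-t + s) h1 (by simpa using h2)
    rw [show -t + s + t = s by ring] at h
    exact h
  -- hence ℘ tends to ℘(-t) along 𝓝[≠]0
  have htend : Tendsto ℘ (𝓝[≠] (0:ℂ)) (𝓝 (℘ (-t))) := by
    have hc : Tendsto (fun s : ℂ => ℘ (-t + s)) (𝓝[≠] (0:ℂ)) (𝓝 (℘ (-t))) := by
      have hmv : Tendsto (fun s : ℂ => -t + s) (𝓝[≠] (0:ℂ)) (𝓝 (-t)) := by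
        apply Tendsto.mono_left _ nhdsWithin_le_nhds
        have : Tendsto (fun s : ℂ => -t + s) (𝓝 0) (𝓝 (-t + 0)) :=
          ((continuous_const (y := -t)).add continuous_id).tendsto (0:ℂ)
        simpa using this
      exact (wp_contAt h℘ hnt).tendsto.comp hmv
    exact hc.congr' (by filter_upwards [hev] with s hs using hs.symm)
  -- so (s²)⁻¹ converges, contradiction
  have hinv : Tendsto (fun s : ℂ => (s^2)⁻¹) (𝓝[≠] (0:ℂ)) (𝓝 (℘ (-t) - 0)) := by
    apply (htend.sub (hP_tendsto h℘)).congr'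
    filter_upwards [self_mem_nhdsWithin] with s hs
    rw [wp_eq (℘ := ℘) hs]; ring
  have hnorm : Tendsto (fun s : ℂ => ‖(s^2)⁻¹‖) (𝓝[≠] (0:ℂ)) (𝓝 ‖℘ (-t) - 0‖) :=
    hinv.norm
  have hatTop : Tendsto (fun s : ℂ => ‖(s^2)⁻¹‖) (𝓝[≠] (0:ℂ)) atTop := by
    have hsq : Tendsto (fun s : ℂ => ‖s‖^2) (𝓝[≠] (0:ℂ)) (𝓝[>] (0:ℝ)) := by
      rw [tendsto_nhdsWithin_iff]
      constructor
      · apply Tendsto.mono_left _ nhdsWithin_le_nhds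
        have : Tendsto (fun s : ℂ => ‖s‖^2) (𝓝 0) (𝓝 (‖(0:ℂ)‖^2)) :=
          (continuous_norm.pow 2).tendsto (0:ℂ)
        simpa using this
      · filter_upwards [self_mem_nhdsWithin] with s hs
        have hs0 : ‖s‖ ≠ 0 := norm_ne_zero_iff.mpr hs
        have : (0:ℝ) < ‖s‖ := lt_of_le_of_ne (norm_nonneg s) (Ne.symm hs0)
        exact Set.mem_Ioi.mpr (by positivity)
    have := tendsto_inv_nhdsGT_zero.comp hsq
    apply this.congr
    intro s
    simp [Function.comp]
  exact not_tendsto_atTop_of_tendsto_nhds hnorm hatTop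

lemma analyticAt_dslope {f : ℂ → ℂ} {c : ℂ} (hf : AnalyticAt ℂ f c) :
    AnalyticAt ℂ (dslope f c) c := by
  obtain ⟨p, hp⟩ := hf
  exact ⟨p.fslope, hp.has_fpower_series_dslope_fslope⟩

lemma deriv_even_zero {k : ℂ → ℂ} (hk : ∀ z, k (-z) = k z) : deriv k 0 = 0 := by
  have h1 : deriv (fun x : ℂ => k (-x)) 0 = -deriv k (-0) := deriv_comp_neg k 0
  have h2 : (fun x : ℂ => k (-x)) = k := funext hk
  rw [h2, neg_zero] at h1
  have h3 : (2:ℂ) * deriv k 0 = 0 := by linear_combination h1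
  simpa using h3

lemma wp_ODE (hτ : 0 < τ.im) (h℘ : IsWeierstrassP τ ℘) :
    ∃ A B : ℂ, ∀ z ∉ lat τ, (deriv ℘ z)^2 = 4 * ℘ z^3 + A * ℘ z + B := by
  classical
  set h : ℂ → ℂ := hP ℘ with hh
  set h1 : ℂ → ℂ := dslope h 0 with hh1
  set h2 : ℂ → ℂ := dslope h1 0 with hh2
  set h3 : ℂ → ℂ := dslope h2 0 with hh3
  set H : ℂ → ℂ := dslope h3 0 with hH
  set a : ℂ := h2 0 with ha
  -- analyticity chain
  have hhA : AnalyticAt ℂ h 0 := hP_analyticAt hτ h℘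
  have hh1A : AnalyticAt ℂ h1 0 := analyticAt_dslope hhA
  have hh2A : AnalyticAt ℂ h2 0 := analyticAt_dslope hh1A
  have hh3A : AnalyticAt ℂ h3 0 := analyticAt_dslope hh2A
  have hHA : AnalyticAt ℂ H 0 := analyticAt_dslope hh3A
  have h00 : h 0 = 0 := hP_zero
  -- global identities
  have id1 : ∀ z, h z = z * h1 z := by
    intro z; rcases eq_or_ne z 0 with rfl | hz
    · simp [hh, hP_zero]
    · rw [hh1, dslope_of_ne _ hz, slope_def_field, h00]; field_simp; ring
  have e10 : h1 0 = 0 := by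
    rw [hh1, dslope_same]; exact (hP_hasDeriv0 h℘).deriv
  have id2 : ∀ z, h1 z = z * h2 z := by
    intro z; rcases eq_or_ne z 0 with rfl | hz
    · simp [e10]
    · rw [hh2, dslope_of_ne _ hz, slope_def_field, e10]; field_simp; ring
  have id3 : ∀ z, h2 z = a + z * h3 z := by
    intro z; rcases eq_or_ne z 0 with rfl | hz
    · simp [ha]
    · rw [hh3, dslope_of_ne _ hz, slope_def_field, ← ha]; field_simp; ring
  have hsq : ∀ z, h z = z^2 * h2 z := by
    intro z; rw [id1, id2]; ring
  have h2even : ∀ z, h2 (-z) = h2 z := by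
    intro z
    rcases eq_or_ne z 0 with rfl | hz
    · rw [neg_zero]
    · have e1 : h (-z) = h z := hP_even h℘ z
      have e2 := hsq z
      have e3 := hsq (-z)
      rw [e1] at e3
      have : z^2 * h2 (-z) = z^2 * h2 z := by
        rw [show z^2 * h2 (-z) = (-z)^2 * h2 (-z) by ring, ← e3, e2]
      exact mul_left_cancel₀ (pow_ne_zero 2 hz) this
  have e30 : h3 0 = 0 := by
    rw [hh3, dslope_same]; exact deriv_even_zero h2even
  have id4 : ∀ z, h3 z = z * H z := by
    intro z; rcases eq_or_ne z 0 with rfl | hz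
    · simp [e30]
    · rw [hH, dslope_of_ne _ hz, slope_def_field, e30]; field_simp; ring
  have hrep : ∀ z, h z = a * z^2 + z^4 * H z := by
    intro z; rw [hsq, id3, id4]; ring
  -- continuity of H and deriv H at 0
  have hHc : ContinuousAt H 0 := hHA.continuousAt
  obtain ⟨sH, hsH_mem, hsH⟩ := hHA.exists_mem_nhds_analyticOnNhd
  have hHd : ContinuousAt (deriv H) 0 :=
    ((hsH.deriv) 0 (mem_of_mem_nhds hsH_mem)).continuousAt
  -- the elliptic difference function
  set S : ℂ → ℂ := fun z => if z ∈ lat τ then 0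
    else (deriv ℘ z)^2 - 4 * ℘ z^3 + (20*a) * ℘ z + 28 * H 0 with hS
  have hS_off : ∀ z ∉ lat τ, S z = (deriv ℘ z)^2 - 4 * ℘ z^3 + (20*a) * ℘ z + 28 * H 0 :=
    fun z hz => if_neg hz
  have hS_lat : ∀ z ∈ lat τ, S z = 0 := fun z hz => if_pos hz
  -- periodicity
  have hSper : ∀ w ∈ lat τ, ∀ z, S (z + w) = S z := by
    intro w hw z
    by_cases hz : z ∈ lat τ
    · rw [hS_lat _ hz, hS_lat _ (add_mem hz hw)]
    · have hzw : z + w ∉ lat τ := by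
        intro hmem
        exact hz (by simpa using sub_mem hmem hw)
      rw [hS_off _ hzw, hS_off _ hz]
      have hper0 : ℘ (z + w) = ℘ z := h℘.periodic w hw z
      have hderiv : deriv ℘ (z + w) = deriv ℘ z := by
        have e1 : deriv (fun x => ℘ (x + w)) z = deriv ℘ (z + w) := deriv_comp_add_const ℘ w z
        have e2 : (fun x => ℘ (x + w)) = ℘ := funext (h℘.periodic w hw)
        rw [e2] at e1
        exact e1.symm
      rw [hper0, hderiv]
  -- the crucial limit at 0
  set Ψ : ℂ × ℂ × ℂ → ℂ := fun p =>
    (2*a*p.1 + 4*p.1^3*p.2.1 + p.1^4*p.2.2)^2 - 28*p.2.1 - 4*p.1*p.2.2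
      - 12*a^2*p.1^2 - 24*a*p.1^4*p.2.1 - 12*p.1^6*p.2.1^2
      - 4*(a*p.1^2+p.1^4*p.2.1)^3 + 20*a*(a*p.1^2+p.1^4*p.2.1) + 28 * H 0 with hΨ
  have hev : ∀ᶠ z in 𝓝[≠] (0:ℂ), S z = Ψ (z, H z, deriv H z) := by
    have hHana : ∀ᶠ z in 𝓝[≠] (0:ℂ), AnalyticAt ℂ H z :=
      eventually_nhdsWithin_of_eventually_nhds hHA.eventually_analyticAt
    filter_upwards [eventually_not_lat hτ, self_mem_nhdsWithin, hHana] with z hzl hz0 hzH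
    have hz0' : z ≠ 0 := hz0
    -- ℘ agrees with F near z
    set F : ℂ → ℂ := fun w => (w^2)⁻¹ + (a * w^2 + w^4 * H w) with hF
    have hFeq : ℘ =ᶠ[𝓝 z] F := by
      filter_upwards [isOpen_ne.mem_nhds hz0'] with w hw
      rw [hF]
      simp only
      rw [wp_eq (℘ := ℘) hw, ← hrep w]
    have hDF : HasDerivAt F (-(2*z^1)/(z^2)^2
        + (a*(2*z^1) + ((4*z^3)*H z + z^4 * deriv H z))) z := by
      have hp2 : HasDerivAt (fun w : ℂ => w^2) ((2:ℕ)*z^1) z := by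
        simpa using hasDerivAt_pow 2 z
      have hinv : HasDerivAt (fun w : ℂ => (w^2)⁻¹) (-(2*z^1)/(z^2)^2) z := by
        simpa using hp2.fun_inv (pow_ne_zero 2 hz0')
      have hp4 : HasDerivAt (fun w : ℂ => w^4) ((4:ℕ)*z^3) z := by
        simpa using hasDerivAt_pow 4 z
      have hHz : HasDerivAt H (deriv H z) z := hzH.differentiableAt.hasDerivAt
      have hconst : HasDerivAt (fun w : ℂ => a * w^2) (a*(2*z^1)) z := by
        simpa using hp2.const_mul a
      have hmul : HasDerivAt (fun w : ℂ => w^4 * H w) ((4:ℕ)*z^3 * H z + z^4 * deriv H z) z :=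
        hp4.mul hHz
      simpa using hinv.fun_add (hconst.fun_add (by simpa using hmul))
    have hd : deriv ℘ z = -(2*z^1)/(z^2)^2 + (a*(2*z^1) + ((4*z^3)*H z + z^4 * deriv H z)) :=
      hFeq.deriv_eq.trans hDF.deriv
    have hv : ℘ z = (z^2)⁻¹ + (a * z^2 + z^4 * H z) := by
      rw [wp_eq (℘ := ℘) hz0', ← hrep z]
    rw [hS_off _ hzl, hd, hv, hΨ]
    simp only
    field_simp
    ring
  have hΨ0 : Ψ (0, H 0, deriv H 0) = 0 := by rw [hΨ]; norm_num
  have hStend : Tendsto S (𝓝[≠] (0:ℂ)) (𝓝 0) := by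
    have htriple : Tendsto (fun z : ℂ => (z, H z, deriv H z)) (𝓝[≠] (0:ℂ))
        (𝓝 (0, H 0, deriv H 0)) := by
      apply Tendsto.mono_left _ nhdsWithin_le_nhds
      exact (continuousAt_id.prodMk (hHc.prodMk hHd)).tendsto
    have hΨc : ContinuousAt Ψ (0, H 0, deriv H 0) := by
      rw [hΨ]; fun_prop
    have := hΨc.tendsto.comp htriple
    rw [hΨ0] at this
    exact this.congr' (hev.mono fun z hz => hz.symm)
  -- S is entire
  have hSdiff_off : ∀ z ∉ lat τ, DifferentiableAt ℂ S z := by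
    intro z hz
    have hd1 : DifferentiableAt ℂ (deriv ℘) z :=
      ((h℘.analytic.deriv) z hz).differentiableAt
    have hd0 : DifferentiableAt ℂ ℘ z := wp_diffAt h℘ hz
    have : DifferentiableAt ℂ
        (fun z => (deriv ℘ z)^2 - 4 * ℘ z^3 + (20*a) * ℘ z + 28 * H 0) z := by
      fun_prop
    apply this.congr_of_eventuallyEq
    filter_upwards [compl_lat_mem_nhds hτ hz] with w hw
    exact hS_off _ hw
  have hS0 : S 0 = 0 := hS_lat 0 (zero_mem _)
  have hSdiff0 : DifferentiableAt ℂ S 0 := by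
    apply AnalyticAt.differentiableAt
    apply Complex.analyticAt_of_differentiable_on_punctured_nhds_of_continuousAt
    · filter_upwards [eventually_not_lat hτ] with z hz
      exact hSdiff_off z hz
    · rw [← continuousWithinAt_compl_self]
      unfold ContinuousWithinAt
      rw [hS0]
      exact hStend
  have hSdiff : Differentiable ℂ S := by
    intro z
    by_cases hz : z ∈ lat τ
    · have hfun : ∀ x, S x = S (x - z) := by
        intro x
        have := hSper z hz (x - z)
        rw [sub_add_cancel] at this
        exact this
      have : DifferentiableAt ℂ (fun x => S (x - z)) z := by
        have hcomp : DifferentiableAt ℂ S (z - z) := by rw [sub_self]; exact hSdiff0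
        have := DifferentiableAt.comp (g := S) (f := fun x : ℂ => x - z) z hcomp
          (differentiableAt_id.sub_const z)
        simpa [Function.comp_def] using this
      exact this.congr_of_eventuallyEq (Filter.Eventually.of_forall hfun)
    · exact hSdiff_off z hz
  have hSbdd := bounded_of_elliptic hτ hSdiff.continuous hSper
  have hSconst : ∀ z, S z = 0 := fun z => by
    rw [← hS0]; exact hSdiff.apply_eq_apply_of_bounded hSbdd z 0
  refine ⟨-(20*a), -(28 * H 0), fun z hz => ?_⟩
  have := hSconst z
  rw [hS_off _ hz] at this
  linear_combination this

lemma latc_preconnected (hτ : 0 < τ.im) : IsPreconnected {z : ℂ | z ∉ lat τ} := by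
  have h1 : (1:Cardinal) < Module.rank ℝ ℂ := by
    rw [Complex.rank_real_complex]; norm_num
  have := ((lat_countable τ).isConnected_compl_of_one_lt_rank h1).isPreconnected
  exact this

lemma cube_deriv_tendsto (hτ : 0 < τ.im) (h℘ : IsWeierstrassP τ ℘) :
    Tendsto (fun z : ℂ => z^3 * deriv ℘ z) (𝓝[≠] (0:ℂ)) (𝓝 (-2)) := by
  obtain ⟨s, hs_mem, hs⟩ := (hP_analyticAt hτ h℘).exists_mem_nhds_analyticOnNhd
  have hdc : ContinuousAt (deriv (hP ℘)) 0 :=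
    ((hs.deriv) 0 (mem_of_mem_nhds hs_mem)).continuousAt
  have hd0 : deriv (hP ℘) 0 = 0 := (hP_hasDeriv0 h℘).deriv
  have hev : ∀ᶠ z in 𝓝[≠] (0:ℂ), z^3 * deriv ℘ z = -2 + z^3 * deriv (hP ℘) z := by
    filter_upwards [self_mem_nhdsWithin,
      eventually_nhdsWithin_of_eventually_nhds hs_mem] with z hz0 hzs
    have hz0' : z ≠ 0 := hz0
    have hFeq : ℘ =ᶠ[𝓝 z] fun w => (w^2)⁻¹ + hP ℘ w := by
      filter_upwards [isOpen_ne.mem_nhds hz0'] with w hw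
      exact wp_eq (℘ := ℘) hw
    have hDF : HasDerivAt (fun w : ℂ => (w^2)⁻¹ + hP ℘ w)
        (-(2*z^1)/(z^2)^2 + deriv (hP ℘) z) z := by
      have hp2 : HasDerivAt (fun w : ℂ => w^2) ((2:ℕ)*z^1) z := by
        simpa using hasDerivAt_pow 2 z
      have hinv : HasDerivAt (fun w : ℂ => (w^2)⁻¹) (-(2*z^1)/(z^2)^2) z := by
        simpa using hp2.fun_inv (pow_ne_zero 2 hz0')
      exact hinv.add ((hs z hzs).differentiableAt.hasDerivAt)
    rw [hFeq.deriv_eq, hDF.deriv]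
    field_simp
  have hlim : Tendsto (fun z : ℂ => -2 + z^3 * deriv (hP ℘) z) (𝓝[≠] (0:ℂ)) (𝓝 (-2)) := by
    have h3 : Tendsto (fun z : ℂ => z^3) (𝓝[≠] (0:ℂ)) (𝓝 0) := by
      apply Tendsto.mono_left _ nhdsWithin_le_nhds
      simpa using (continuous_pow 3).tendsto (0:ℂ)
    have hD : Tendsto (fun z : ℂ => deriv (hP ℘) z) (𝓝[≠] (0:ℂ)) (𝓝 0) := by
      apply Tendsto.mono_left _ nhdsWithin_le_nhds
      have hD := hdc.tendsto
      rwa [hd0] at hD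
    have := h3.mul hD
    simpa using tendsto_const_nhds.add this
  exact hlim.congr' (hev.mono fun z hz => hz.symm)

lemma wp_deriv_not_all_zero (hτ : 0 < τ.im) (h℘ : IsWeierstrassP τ ℘) :
    ¬ (∀ z ∉ lat τ, deriv ℘ z = 0) := by
  intro hall
  have hzero : Tendsto (fun z : ℂ => z^3 * deriv ℘ z) (𝓝[≠] (0:ℂ)) (𝓝 0) := by
    have hev : ∀ᶠ z in 𝓝[≠] (0:ℂ), (0:ℂ) = z^3 * deriv ℘ z := by
      filter_upwards [eventually_not_lat hτ] with z hz
      rw [hall z hz, mul_zero]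
    exact tendsto_const_nhds.congr' hev
  have := tendsto_nhds_unique hzero (cube_deriv_tendsto hτ h℘)
  norm_num at this

lemma wp_ODE2 (hτ : 0 < τ.im) (h℘ : IsWeierstrassP τ ℘) {A B : ℂ}
    (hAB : ∀ z ∉ lat τ, (deriv ℘ z)^2 = 4 * ℘ z^3 + A * ℘ z + B) :
    ∀ z ∉ lat τ, deriv (deriv ℘) z = 6 * ℘ z^2 + A/2 := by
  -- derivative of the identity : ℘' * (2℘'' - 12℘² - A) = 0 off the lattice
  have hprod : ∀ z ∉ lat τ, deriv ℘ z * (2 * deriv (deriv ℘) z - 12 * ℘ z^2 - A) = 0 := by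
    intro z hz
    have hP1 : HasDerivAt ℘ (deriv ℘ z) z := (wp_diffAt h℘ hz).hasDerivAt
    have hQ1 : HasDerivAt (deriv ℘) (deriv (deriv ℘) z) z :=
      ((h℘.analytic.deriv) z hz).differentiableAt.hasDerivAt
    set ψ : ℂ → ℂ := fun w => (deriv ℘ w)^2 - (4 * ℘ w^3 + A * ℘ w + B) with hψ
    have hψ0 : ψ =ᶠ[𝓝 z] fun _ => 0 := by
      filter_upwards [compl_lat_mem_nhds hτ hz] with w hw
      rw [hψ]
      simp only
      rw [hAB w hw]
      ring
    have hψd : HasDerivAt ψ (2 * deriv ℘ z ^ 1 * deriv (deriv ℘) z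
        - (4 * (3 * ℘ z ^ 2 * deriv ℘ z) + A * deriv ℘ z)) z := by
      have h1 : HasDerivAt (fun w => (deriv ℘ w)^2)
          (2 * deriv ℘ z ^ 1 * deriv (deriv ℘) z) z := by
        simpa using hQ1.fun_pow 2
      have h2 : HasDerivAt (fun w => ℘ w ^ 3) (3 * ℘ z ^ 2 * deriv ℘ z) z := by
        simpa using hP1.fun_pow 3
      exact h1.sub (((h2.const_mul 4).add (hP1.const_mul A)).add_const B)
    have hzero : deriv ψ z = 0 := by
      rw [hψ0.deriv_eq]
      exact deriv_const _ _
    rw [hψd.deriv] at hzero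
    linear_combination hzero
  -- the second factor must vanish identically
  have hφ : ∀ z ∉ lat τ, 2 * deriv (deriv ℘) z - 12 * ℘ z^2 - A = 0 := by
    by_contra hcon
    push_neg at hcon
    obtain ⟨z₀, hz₀, hφ0⟩ := hcon
    have hφcont : ContinuousAt (fun w => 2 * deriv (deriv ℘) w - 12 * ℘ w^2 - A) z₀ := by
      have hc1 : ContinuousAt (deriv (deriv ℘)) z₀ :=
        ((h℘.analytic.deriv.deriv) z₀ hz₀).continuousAt
      have hc2 : ContinuousAt ℘ z₀ := (wp_diffAt h℘ hz₀).continuousAt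
      fun_prop
    have hev : ∀ᶠ w in 𝓝 z₀, deriv ℘ w = 0 := by
      have hne : ∀ᶠ w in 𝓝 z₀, 2 * deriv (deriv ℘) w - 12 * ℘ w^2 - A ≠ 0 :=
        hφcont.eventually_ne hφ0
      filter_upwards [hne, compl_lat_mem_nhds hτ hz₀] with w hw1 hw2
      have := hprod w hw2
      rcases mul_eq_zero.mp this with h | h
      · exact h
      · exact absurd h hw1
    have hEq : Set.EqOn (deriv ℘) 0 {z : ℂ | z ∉ lat τ} := by
      apply AnalyticOnNhd.eqOn_zero_of_preconnected_of_frequently_eq_zero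
        (h℘.analytic.deriv) (latc_preconnected hτ) hz₀
      exact (hev.filter_mono nhdsWithin_le_nhds).frequently
    exact wp_deriv_not_all_zero hτ h℘ (fun z hz => hEq hz)
  intro z hz
  have := hφ z hz
  linear_combination this / 2

lemma core (hτ : 0 < τ.im) (h℘ : IsWeierstrassP τ ℘) {u v : ℂ}
    (hu : u ∉ lat τ) (hv : v ∉ lat τ) (h1 : ℘ u = ℘ v)
    (h2 : deriv ℘ u = deriv ℘ v) : u - v ∈ lat τ := by
  obtain ⟨A, B, hAB⟩ := wp_ODE hτ h℘
  have hODE2 := wp_ODE2 hτ h℘ hAB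
  have hlatopen : IsOpen {z : ℂ | z ∉ lat τ} := (lat_isClosed hτ).isOpen_compl
  by_contra hne
  -- the common domain
  set Ω : Set ℂ := {z : ℂ | u + z ∉ lat τ ∧ v + z ∉ lat τ} with hΩdef
  have hΩopen : IsOpen Ω := by
    have hpre1 : IsOpen ((fun z : ℂ => u + z) ⁻¹' {z : ℂ | z ∉ lat τ}) :=
      hlatopen.preimage (by fun_prop)
    have hpre2 : IsOpen ((fun z : ℂ => v + z) ⁻¹' {z : ℂ | z ∉ lat τ}) :=
      hlatopen.preimage (by fun_prop)
    exact hpre1.inter hpre2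
  have hΩconn : IsPreconnected Ω := by
    have hcompl : Ωᶜ = ((fun w : ℂ => w - u) '' (lat τ : Set ℂ)) ∪
        ((fun w : ℂ => w - v) '' (lat τ : Set ℂ)) := by
      ext z
      simp only [hΩdef, Set.mem_compl_iff, Set.mem_setOf_eq, not_and_or, not_not,
        Set.mem_union, Set.mem_image]
      constructor
      · rintro (h | h)
        · exact Or.inl ⟨u + z, h, by ring⟩
        · exact Or.inr ⟨v + z, h, by ring⟩
      · rintro (⟨w, hw, rfl⟩ | ⟨w, hw, rfl⟩)
        · exact Or.inl (by simpa using hw)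
        · exact Or.inr (by simpa using hw)
    have hcount : (Ωᶜ).Countable := by
      rw [hcompl]
      exact ((lat_countable τ).image _).union ((lat_countable τ).image _)
    have h1' : (1:Cardinal) < Module.rank ℝ ℂ := by
      rw [Complex.rank_real_complex]; norm_num
    have := (hcount.isConnected_compl_of_one_lt_rank h1').isPreconnected
    rwa [compl_compl] at this
  have h0Ω : (0:ℂ) ∈ Ω := by
    constructor <;> simpa
  -- the two analytic functions
  set f : ℂ → ℂ := fun z => ℘ (u + z) with hfdef
  set g : ℂ → ℂ := fun z => ℘ (v + z) with hgdef
  have hfA : AnalyticOnNhd ℂ f Ω := by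
    intro z hz
    have := (h℘.analytic (u + z) hz.1).comp
      ((analyticAt_const (v := u)).add analyticAt_id)
    simpa [Function.comp_def] using this
  have hgA : AnalyticOnNhd ℂ g Ω := by
    intro z hz
    have := (h℘.analytic (v + z) hz.2).comp
      ((analyticAt_const (v := v)).add analyticAt_id)
    simpa [Function.comp_def] using this
  -- the ODE setup
  set V : ℂ × ℂ → ℂ × ℂ := fun p => (p.2, 6 * p.1^2 + A/2) with hV
  set p₀ : ℂ × ℂ := (℘ u, deriv ℘ u) with hp₀
  set Kr : ℝ := max 1 (6 * (2 * ‖℘ u‖ + 2)) with hKr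
  have hKr1 : (1:ℝ) ≤ Kr := le_max_left _ _
  have hLip : LipschitzOnWith Kr.toNNReal V (Metric.closedBall p₀ 1) := by
    rw [lipschitzOnWith_iff_dist_le_mul]
    intro p hp q hq
    have hKrc : (Kr.toNNReal : ℝ) = Kr := Real.coe_toNNReal _ (by positivity)
    rw [hKrc]
    have hd : dist (V p) (V q) = max (dist p.2 q.2) (dist (6 * p.1^2 + A/2) (6 * q.1^2 + A/2)) :=
      Prod.dist_eq
    have hdpq : dist p q = max (dist p.1 q.1) (dist p.2 q.2) := Prod.dist_eq
    have hb1 : dist p.2 q.2 ≤ dist p q := by rw [hdpq]; exact le_max_right _ _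
    have hb0 : dist p.1 q.1 ≤ dist p q := by rw [hdpq]; exact le_max_left _ _
    have hp1 : ‖p.1‖ ≤ ‖℘ u‖ + 1 := by
      have hple : dist p p₀ ≤ 1 := Metric.mem_closedBall.mp hp
      have h' : dist p.1 (℘ u) ≤ 1 := le_trans (by rw [Prod.dist_eq]; exact le_max_left _ _) hple
      calc ‖p.1‖ = ‖℘ u + (p.1 - ℘ u)‖ := by ring_nf
        _ ≤ ‖℘ u‖ + ‖p.1 - ℘ u‖ := norm_add_le _ _
        _ ≤ ‖℘ u‖ + 1 := by rw [← dist_eq_norm] at *; linarith [h']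
    have hq1 : ‖q.1‖ ≤ ‖℘ u‖ + 1 := by
      have hqle : dist q p₀ ≤ 1 := Metric.mem_closedBall.mp hq
      have h' : dist q.1 (℘ u) ≤ 1 := le_trans (by rw [Prod.dist_eq]; exact le_max_left _ _) hqle
      calc ‖q.1‖ = ‖℘ u + (q.1 - ℘ u)‖ := by ring_nf
        _ ≤ ‖℘ u‖ + ‖q.1 - ℘ u‖ := norm_add_le _ _
        _ ≤ ‖℘ u‖ + 1 := by rw [← dist_eq_norm] at *; linarith [h']
    have hsecond : dist (6 * p.1^2 + A/2) (6 * q.1^2 + A/2) ≤ Kr * dist p.1 q.1 := by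
      rw [dist_eq_norm]
      have e : 6 * p.1^2 + A/2 - (6 * q.1^2 + A/2) = 6 * (p.1 + q.1) * (p.1 - q.1) := by ring
      rw [e]
      calc ‖6 * (p.1 + q.1) * (p.1 - q.1)‖ = 6 * ‖p.1 + q.1‖ * ‖p.1 - q.1‖ := by
            rw [norm_mul, norm_mul]; norm_num
        _ ≤ 6 * (2 * ‖℘ u‖ + 2) * ‖p.1 - q.1‖ := by
            apply mul_le_mul_of_nonneg_right _ (norm_nonneg _)
            have := norm_add_le p.1 q.1
            nlinarith [hp1, hq1]
        _ ≤ Kr * ‖p.1 - q.1‖ := by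
            apply mul_le_mul_of_nonneg_right (le_max_right _ _) (norm_nonneg _)
        _ = Kr * dist p.1 q.1 := by rw [dist_eq_norm]
    rw [hd]
    apply max_le
    · calc dist p.2 q.2 ≤ dist p q := hb1
        _ ≤ Kr * dist p q := le_mul_of_one_le_left dist_nonneg hKr1
    · calc dist (6 * p.1^2 + A/2) (6 * q.1^2 + A/2) ≤ Kr * dist p.1 q.1 := hsecond
        _ ≤ Kr * dist p q := by
            apply mul_le_mul_of_nonneg_left hb0 (by positivity)
  -- the two trajectories
  set xf : ℝ → ℂ × ℂ := fun t => (℘ (u + t), deriv ℘ (u + t)) with hxf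
  set xg : ℝ → ℂ × ℂ := fun t => (℘ (v + t), deriv ℘ (v + t)) with hxg
  have hxf_deriv : ∀ t : ℝ, u + (t:ℂ) ∉ lat τ → HasDerivAt xf (V (xf t)) t := by
    intro t ht
    have hd1 : HasDerivAt (fun s : ℝ => ℘ (u + s)) (deriv ℘ (u + t)) t := by
      have hc : HasDerivAt (fun z : ℂ => ℘ (u + z)) (deriv ℘ (u + t)) (t:ℂ) :=
        HasDerivAt.comp_const_add u _ ((wp_diffAt h℘ ht).hasDerivAt)
      exact hc.comp_ofReal
    have hd2 : HasDerivAt (fun s : ℝ => deriv ℘ (u + s)) (6 * ℘ (u + t)^2 + A/2) t := by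
      have hder : HasDerivAt (deriv ℘) (deriv (deriv ℘) (u + t)) (u + t) :=
        ((h℘.analytic.deriv) (u + t) ht).differentiableAt.hasDerivAt
      have hc : HasDerivAt (fun z : ℂ => deriv ℘ (u + z)) (deriv (deriv ℘) (u + t)) (t:ℂ) :=
        HasDerivAt.comp_const_add u _ hder
      have := hc.comp_ofReal
      rwa [hODE2 (u + t) ht] at this
    exact hd1.prodMk hd2
  have hxg_deriv : ∀ t : ℝ, v + (t:ℂ) ∉ lat τ → HasDerivAt xg (V (xg t)) t := by
    intro t ht
    have hd1 : HasDerivAt (fun s : ℝ => ℘ (v + s)) (deriv ℘ (v + t)) t := by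
      have hc : HasDerivAt (fun z : ℂ => ℘ (v + z)) (deriv ℘ (v + t)) (t:ℂ) :=
        HasDerivAt.comp_const_add v _ ((wp_diffAt h℘ ht).hasDerivAt)
      exact hc.comp_ofReal
    have hd2 : HasDerivAt (fun s : ℝ => deriv ℘ (v + s)) (6 * ℘ (v + t)^2 + A/2) t := by
      have hder : HasDerivAt (deriv ℘) (deriv (deriv ℘) (v + t)) (v + t) :=
        ((h℘.analytic.deriv) (v + t) ht).differentiableAt.hasDerivAt
      have hc : HasDerivAt (fun z : ℂ => deriv ℘ (v + z)) (deriv (deriv ℘) (v + t)) (t:ℂ) :=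
        HasDerivAt.comp_const_add v _ hder
      have := hc.comp_ofReal
      rwa [hODE2 (v + t) ht] at this
    exact hd1.prodMk hd2
  -- initial values agree
  have hxf0 : xf 0 = p₀ := by
    rw [hxf, hp₀]
    simp
  have hxg0 : xg 0 = p₀ := by
    rw [hxg, hp₀]
    simp [← h1, ← h2]
  -- eventual membership hypotheses
  have hue : ∀ᶠ t : ℝ in 𝓝 0, u + (t:ℂ) ∉ lat τ := by
    have hcont : Tendsto (fun t : ℝ => u + (t:ℂ)) (𝓝 0) (𝓝 u) := by
      have : Continuous (fun t : ℝ => u + (t:ℂ)) := by fun_prop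
      have h0 := this.tendsto 0
      simpa using h0
    exact hcont.eventually_mem (hlatopen.mem_nhds hu)
  have hve : ∀ᶠ t : ℝ in 𝓝 0, v + (t:ℂ) ∉ lat τ := by
    have hcont : Tendsto (fun t : ℝ => v + (t:ℂ)) (𝓝 0) (𝓝 v) := by
      have : Continuous (fun t : ℝ => v + (t:ℂ)) := by fun_prop
      have h0 := this.tendsto 0
      simpa using h0
    exact hcont.eventually_mem (hlatopen.mem_nhds hv)
  have hxf_ball : ∀ᶠ t : ℝ in 𝓝 0, xf t ∈ Metric.closedBall p₀ 1 := by
    have hcont : ContinuousAt xf 0 := by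
      have hc1 : ContinuousAt (fun t : ℝ => ℘ (u + t)) 0 := by
        have hcA : ContinuousAt (fun t : ℝ => u + (t:ℂ)) 0 := by fun_prop
        have hcB : ContinuousAt ℘ (u + ((0:ℝ):ℂ)) := by
          simpa using (wp_diffAt h℘ hu).continuousAt
        exact ContinuousAt.comp (g := ℘) (f := fun t : ℝ => u + (t:ℂ)) (x := (0:ℝ)) hcB hcA
      have hc2 : ContinuousAt (fun t : ℝ => deriv ℘ (u + t)) 0 := by
        have hcA : ContinuousAt (fun t : ℝ => u + (t:ℂ)) 0 := by fun_prop
        have hcB : ContinuousAt (deriv ℘) (u + ((0:ℝ):ℂ)) := by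
          simpa using ((h℘.analytic.deriv) u hu).continuousAt
        exact ContinuousAt.comp (g := deriv ℘) (f := fun t : ℝ => u + (t:ℂ)) (x := (0:ℝ)) hcB hcA
      exact hc1.prodMk hc2
    have := hcont.eventually_mem (Metric.closedBall_mem_nhds (xf 0) one_pos)
    simpa [hxf0] using this
  have hxg_ball : ∀ᶠ t : ℝ in 𝓝 0, xg t ∈ Metric.closedBall p₀ 1 := by
    have hcont : ContinuousAt xg 0 := by
      have hc1 : ContinuousAt (fun t : ℝ => ℘ (v + t)) 0 := by
        have hcA : ContinuousAt (fun t : ℝ => v + (t:ℂ)) 0 := by fun_prop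
        have hcB : ContinuousAt ℘ (v + ((0:ℝ):ℂ)) := by
          simpa using (wp_diffAt h℘ hv).continuousAt
        exact ContinuousAt.comp (g := ℘) (f := fun t : ℝ => v + (t:ℂ)) (x := (0:ℝ)) hcB hcA
      have hc2 : ContinuousAt (fun t : ℝ => deriv ℘ (v + t)) 0 := by
        have hcA : ContinuousAt (fun t : ℝ => v + (t:ℂ)) 0 := by fun_prop
        have hcB : ContinuousAt (deriv ℘) (v + ((0:ℝ):ℂ)) := by
          simpa using ((h℘.analytic.deriv) v hv).continuousAt
        exact ContinuousAt.comp (g := deriv ℘) (f := fun t : ℝ => v + (t:ℂ)) (x := (0:ℝ)) hcB hcA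
      exact hc1.prodMk hc2
    have := hcont.eventually_mem (Metric.closedBall_mem_nhds (xg 0) one_pos)
    simpa [hxg0] using this
  -- local uniqueness
  have huniq : xf =ᶠ[𝓝 (0:ℝ)] xg := by
    apply ODE_solution_unique_of_eventually (v := fun _ : ℝ => V)
      (s := fun _ : ℝ => Metric.closedBall p₀ 1) (Filter.Eventually.of_forall fun _ => hLip)
    · filter_upwards [hue, hxf_ball] with t ht hb
      exact ⟨hxf_deriv t ht, hb⟩
    · filter_upwards [hve, hxg_ball] with t ht hb
      exact ⟨hxg_deriv t ht, hb⟩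
    · rw [hxf0, hxg0]
  -- transfer to a frequently-equal statement in ℂ
  obtain ⟨δ, hδ, hδeq⟩ := Metric.eventually_nhds_iff.mp huniq
  have hfreq : ∃ᶠ z in 𝓝[≠] (0:ℂ), f z = g z := by
    rw [Filter.frequently_iff]
    intro U hU
    obtain ⟨r, hr, hball⟩ := Metric.mem_nhdsWithin_iff.mp hU
    set t : ℝ := min δ r / 2 with htdef
    have ht0 : 0 < t := by positivity
    have htδ : dist t (0:ℝ) < δ := by
      rw [Real.dist_eq, sub_zero, abs_of_pos ht0]
      have : t ≤ δ/2 := by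
        rw [htdef]
        have := min_le_left δ r
        linarith
      linarith
    have hxeq := hδeq htδ
    have hcomp : ℘ (u + (t:ℂ)) = ℘ (v + (t:ℂ)) := congrArg Prod.fst hxeq
    refine ⟨(t:ℂ), hball ⟨?_, ?_⟩, hcomp⟩
    · rw [Metric.mem_ball, Complex.dist_eq, sub_zero]
      have h1' : ‖(t:ℂ)‖ = |t| := by rw [Complex.norm_real, Real.norm_eq_abs]
      rw [h1', abs_of_pos ht0]
      have : t ≤ r/2 := by
        rw [htdef]
        have := min_le_right δ r
        linarith
      linarith
    · simp only [Set.mem_compl_iff, Set.mem_singleton_iff]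
      exact_mod_cast ne_of_gt ht0
  -- identity theorem
  have hEq : Set.EqOn f g Ω :=
    hfA.eqOn_of_preconnected_of_frequently_eq hgA hΩconn h0Ω hfreq
  -- extra period ⇒ contradiction
  apply no_extra_period hτ h℘ (t := u - v) hne
  intro w hw hwt
  have hzΩ : (w - v) ∈ Ω := by
    refine ⟨?_, ?_⟩
    · rw [show u + (w - v) = w + (u - v) by ring]
      exact hwt
    · rw [show v + (w - v) = w by ring]
      exact hw
  have := hEq hzΩ
  rw [hfdef, hgdef] at this
  simp only at this
  rw [show u + (w - v) = w + (u - v) by ring, show v + (w - v) = w by ring] at this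
  exact this

lemma wp_deriv_periodic (h℘ : IsWeierstrassP τ ℘) {w : ℂ} (hw : w ∈ lat τ) (z : ℂ) :
    deriv ℘ (z + w) = deriv ℘ z := by
  have e1 : deriv (fun x => ℘ (x + w)) z = deriv ℘ (z + w) := deriv_comp_add_const ℘ w z
  have e2 : (fun x => ℘ (x + w)) = ℘ := funext (h℘.periodic w hw)
  rw [e2] at e1
  exact e1.symm

lemma wp_deriv_odd (h℘ : IsWeierstrassP τ ℘) (z : ℂ) :
    deriv ℘ (-z) = -deriv ℘ z := by
  have e1 : deriv (fun x : ℂ => ℘ (-x)) z = -deriv ℘ (-z) := deriv_comp_neg ℘ z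
  have e2 : (fun x : ℂ => ℘ (-x)) = ℘ := funext h℘.even
  rw [e2] at e1
  linear_combination e1

lemma zero_classification (hτ : 0 < τ.im) (h℘ : IsWeierstrassP τ ℘) {u v : ℂ}
    (hu : u ∉ lat τ) (hv : v ∉ lat τ) (h : ℘ u = ℘ v) :
    u - v ∈ lat τ ∨ u + v ∈ lat τ := by
  obtain ⟨A, B, hAB⟩ := wp_ODE hτ h℘
  have hsq : (deriv ℘ u)^2 = (deriv ℘ v)^2 := by
    rw [hAB u hu, hAB v hv, h]
  have hfact : (deriv ℘ u - deriv ℘ v) * (deriv ℘ u + deriv ℘ v) = 0 := by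
    linear_combination hsq
  rcases mul_eq_zero.mp hfact with h0 | h0
  · left
    exact core hτ h℘ hu hv h (by linear_combination h0)
  · right
    have hnv : -v ∉ lat τ := fun hm => hv (by simpa using neg_mem hm)
    have h1 : ℘ u = ℘ (-v) := by rw [h℘.even v]; exact h
    have h2 : deriv ℘ u = deriv ℘ (-v) := by
      rw [wp_deriv_odd h℘ v]
      linear_combination h0
    have := core hτ h℘ hu hnv h1 h2
    simpa [sub_neg_eq_add] using this

lemma double_pole_β (hτ : 0 < τ.im) (h℘ : IsWeierstrassP τ ℘) {α β : ℂ}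
    (hd : β - α ∉ lat τ) :
    Tendsto (fun z => (z - β) ^ 2 * (℘ (z - α) - ℘ (z - β))) (𝓝[≠] β) (𝓝 (-1)) := by
  have key : Tendsto (fun w : ℂ => w^2 * ℘ (w + (β - α)) - w^2 * ℘ w) (𝓝[≠] 0)
      (𝓝 (-1)) := by
    have := (sq_wp_shift_tendsto hτ h℘ hd).sub (sq_wp_tendsto h℘)
    simpa using this
  have := key.comp (shift_punct_tendsto β)
  apply this.congr
  intro z
  simp only [Function.comp_apply]
  rw [show z - β + (β - α) = z - α by ring]
  ring

end WeierstrassAux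

/-- for distinct points `α, β` of `E = ℂ/⟨1,τ⟩`, the elliptic function
`g(z) = ℘(z-α) - ℘(z-β)` has divisor `∑_{2x = α+β}[x] - 2[α] - 2[β]`: its zeros are
exactly the points `x` with `2x = α + β` on `E` and they are simple, it has double poles
at `α` and `β` (with leading coefficient `1`), it has degree `4`, and its zero set is a
coset of the `2`-torsion subgroup `E[2]`. -/
theorem weierstrass_difference_divisor (τ : ℂ) (hτ : 0 < τ.im)
    (℘ : ℂ → ℂ) (h℘ : IsWeierstrassP τ ℘) (α β : ℂ)
    (hαβ : (QuotientAddGroup.mk α : ℂ ⧸ lat τ) ≠ QuotientAddGroup.mk β) :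
    -- the zeros are exactly the solutions of `2x = α + β` on `E` …
    (∀ z : ℂ, z - α ∉ lat τ → z - β ∉ lat τ →
      (℘ (z - α) - ℘ (z - β) = 0 ↔
        (QuotientAddGroup.mk (z + z) : ℂ ⧸ lat τ) = QuotientAddGroup.mk (α + β))) ∧
    -- … and they are simple:
    (∀ z : ℂ, z - α ∉ lat τ → z - β ∉ lat τ → ℘ (z - α) - ℘ (z - β) = 0 →
      deriv (fun w => ℘ (w - α) - ℘ (w - β)) z ≠ 0) ∧
    -- double poles with leading coefficient `1` at `α` and `β`:
    Filter.Tendsto (fun z => (z - α) ^ 2 * (℘ (z - α) - ℘ (z - β)))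
      (nhdsWithin α {α}ᶜ) (nhds 1) ∧
    Filter.Tendsto (fun z => (z - β) ^ 2 * (℘ (z - α) - ℘ (z - β)))
      (nhdsWithin β {β}ᶜ) (nhds (-1)) ∧
    -- the function has degree `4`:
    Set.ncard {x : ℂ ⧸ lat τ |
        x + x = QuotientAddGroup.mk (α + β)} = 4 ∧
    -- the zero set is a coset of `E[2]`:
    ∃ x₀ : ℂ ⧸ lat τ,
      {x : ℂ ⧸ lat τ | x + x = QuotientAddGroup.mk (α + β)} =
        (fun t => x₀ + t) '' {t : ℂ ⧸ lat τ | t + t = 0} := by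
  have hαβ1 : α - β ∉ lat τ := fun h => hαβ (QuotientAddGroup.eq_iff_sub_mem.mpr h)
  have hβα : β - α ∉ lat τ := fun h => hαβ1 (by simpa using neg_mem h)
  -- part 1
  have part1 : ∀ z : ℂ, z - α ∉ lat τ → z - β ∉ lat τ →
      (℘ (z - α) - ℘ (z - β) = 0 ↔
        (QuotientAddGroup.mk (z + z) : ℂ ⧸ lat τ) = QuotientAddGroup.mk (α + β)) := by
    intro z hzα hzβ
    constructor
    · intro h0
      have heq : ℘ (z - α) = ℘ (z - β) := sub_eq_zero.mp h0
      rcases zero_classification hτ h℘ hzα hzβ heq with h | h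
      · exfalso
        apply hβα
        have : (z - α) - (z - β) = β - α := by ring
        rwa [this] at h
      · rw [QuotientAddGroup.eq_iff_sub_mem]
        have : (z + z) - (α + β) = (z - α) + (z - β) := by ring
        rwa [this]
    · intro hq
      have hlam : (z + z) - (α + β) ∈ lat τ := QuotientAddGroup.eq_iff_sub_mem.mp hq
      have hrw : z - β = -(z - α) + ((z + z) - (α + β)) := by ring
      rw [hrw, h℘.periodic _ hlam (-(z - α)), h℘.even (z - α), sub_self]
  refine ⟨part1, ?_, double_pole_α hτ h℘ hαβ1, double_pole_β hτ h℘ hβα,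
    torsion_card hτ (α + β), torsion_coset (α + β)⟩
  -- part 2: simple zeros
  intro z hzα hzβ h0
  have hlam : (z + z) - (α + β) ∈ lat τ := QuotientAddGroup.eq_iff_sub_mem.mp
    ((part1 z hzα hzβ).mp h0)
  have hD : HasDerivAt (fun w => ℘ (w - α) - ℘ (w - β))
      (deriv ℘ (z - α) - deriv ℘ (z - β)) z := by
    have h1 : HasDerivAt (fun w => ℘ (w - α)) (deriv ℘ (z - α)) z :=
      HasDerivAt.comp_sub_const z α ((wp_diffAt h℘ hzα).hasDerivAt)
    have h2 : HasDerivAt (fun w => ℘ (w - β)) (deriv ℘ (z - β)) z :=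
      HasDerivAt.comp_sub_const z β ((wp_diffAt h℘ hzβ).hasDerivAt)
    exact h1.sub h2
  rw [hD.deriv]
  have hd2 : deriv ℘ (z - β) = -deriv ℘ (z - α) := by
    have hrw : z - β = -(z - α) + ((z + z) - (α + β)) := by ring
    rw [hrw, wp_deriv_periodic h℘ hlam (-(z - α)), wp_deriv_odd h℘ (z - α)]
  rw [hd2]
  intro hcontra
  have hzero : deriv ℘ (z - α) = 0 := by
    have h2 : (2:ℂ) * deriv ℘ (z - α) = 0 := by linear_combination hcontra
    simpa using h2
  have hnv : -(z - α) ∉ lat τ := fun hm => hzα (by simpa using neg_mem hm)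
  have hcore : (z - α) - -(z - α) ∈ lat τ := by
    apply core hτ h℘ hzα hnv ((h℘.even (z - α)).symm)
    rw [wp_deriv_odd h℘ (z - α), hzero, neg_zero]
  apply hαβ1
  have : α - β = ((z + z) - (α + β)) - ((z - α) - -(z - α)) := by ring
  rw [this]
  exact sub_mem hlam hcore
end

section
/- Let E be an elliptic curve over an algebraically closed field of characteristic 0 with function field K. Let β : Λ²K^× → ℤ[E]⁻ be the map sending f ∧ g to ∑_{i,j} nᵢmⱼ[xᵢ - yⱼ], where div(f) = ∑ nᵢ[xᵢ] and div(g) = ∑ mⱼ[yⱼ], and ℤ[E]⁻ is ℤ[E] modulo the elements [ξ]+[-ξ]. Then β is well defined (independent of the representation of an element of Λ²K^× and compatible with bilinearity and antisymmetry). -/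
open Finsupp

/-- An abstract interface for divisor theory on an elliptic curve `E` (identified with its
group of points) over an algebraically closed field `k` of characteristic `0`, with function
field `K`.  The field `div` assigns to every nonzero rational function its divisor, as a
finitely supported `ℤ`-valued function on `E`; the axioms record multiplicativity, that
divisors of constants vanish (and conversely), that the total degree of a divisor of a
function is `0`, and Abel's theorem: a degree-`0` divisor is principal iff its weighted sum
of points vanishes in the group `E`. -/
structure CurveSetup (k E : Type*) [Field k] [IsAlgClosed k] [CharZero k]
    [AddCommGroup E] where
  /-- the function field of the elliptic curve -/
  K : Type*
  [fldK : Field K]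
  [alg : Algebra k K]
  /-- the divisor of a rational function (junk value `0` at `f = 0`) -/
  div : K → (E →₀ ℤ)
  div_zero' : div 0 = 0
  div_mul : ∀ {f g : K}, f ≠ 0 → g ≠ 0 → div (f * g) = div f + div g
  div_algebraMap : ∀ c : k, div (algebraMap k K c) = 0
  div_eq_zero : ∀ {f : K}, f ≠ 0 → div f = 0 → ∃ c : k, f = algebraMap k K c
  degree_sum : ∀ {f : K}, f ≠ 0 → (div f).sum (fun _ n => n) = 0
  abel_sum : ∀ {f : K}, f ≠ 0 → (div f).sum (fun x n => n • x) = 0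
  abel_exists : ∀ D : E →₀ ℤ, D.sum (fun _ n => n) = 0 → D.sum (fun x n => n • x) = 0 →
    ∃ f : K, f ≠ 0 ∧ div f = D

attribute [instance] CurveSetup.fldK CurveSetup.alg

variable {k E : Type*} [Field k] [IsAlgClosed k] [CharZero k] [AddCommGroup E]

/-- The degree of a rational function: the number of its zeros counted with
multiplicity. -/
def CurveSetup.deg (S : CurveSetup k E) (f : S.K) : ℤ :=
  (S.div f).sum fun _ n => max n 0

/-- `ℤ[E]⁻`: the free abelian group on the points of `E` modulo the subgroup generated by
the elements `[ξ] + [-ξ]`. -/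
abbrev ZEminus (E : Type*) [AddCommGroup E] : Type _ :=
  FreeAbelianGroup E ⧸
    AddSubgroup.closure { r | ∃ ξ : E, r = FreeAbelianGroup.of ξ + FreeAbelianGroup.of (-ξ) }

/-- The wedge `f ∧ g ∈ Λ² K^×` of two units, as an element of the degree-two part
`⋀[ℤ]² (K^×)` of the exterior algebra of `K^×` written additively. -/
noncomputable def wedge2 {K : Type*} [Field K] (f g : Kˣ) : ⋀[ℤ]^2 (Additive Kˣ) :=
  ⟨ExteriorAlgebra.ιMulti ℤ 2 ![Additive.ofMul f, Additive.ofMul g],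
    ExteriorAlgebra.ιMulti_range ℤ 2 ⟨![Additive.ofMul f, Additive.ofMul g], rfl⟩⟩

section BetaAux

variable {E : Type*} [AddCommGroup E]

noncomputable def cm (E : Type*) [AddCommGroup E] : E → ZEminus E := fun ξ =>
  QuotientAddGroup.mk' _ (FreeAbelianGroup.of ξ)

lemma cm_add_neg (ξ : E) : cm E ξ + cm E (-ξ) = 0 := by
  have h : ((FreeAbelianGroup.of ξ + FreeAbelianGroup.of (-ξ) : FreeAbelianGroup E) : ZEminus E)
      = 0 :=
    (QuotientAddGroup.eq_zero_iff _).mpr (AddSubgroup.subset_closure ⟨ξ, rfl⟩)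
  simpa [cm] using h

lemma cm_neg (ξ : E) : cm E (-ξ) = - cm E ξ :=
  ((neg_eq_of_add_eq_zero_right (cm_add_neg ξ))).symm

lemma cm_sub_comm (x y : E) : cm E (x - y) = - cm E (y - x) := by
  rw [← neg_sub, cm_neg]

lemma sq_smul_cm_zero (n : ℤ) : (n * n) • cm E 0 = n • cm E 0 := by
  have h2 : cm E 0 + cm E 0 = 0 := by simpa using cm_add_neg (0 : E)
  obtain ⟨r, hr⟩ : Even (n * n - n) := by
    have h := Int.even_mul_succ_self n
    have e : n * n - n = n * (n + 1) - 2 * n := by ring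
    rw [e]
    exact h.sub ⟨n, by ring⟩
  have e2 : n * n = n + (r + r) := by omega
  rw [e2, add_smul, add_smul, ← smul_add, h2, smul_zero, add_zero]

lemma cm_key (s : Finset E) (a : E → ℤ) :
    ∑ x ∈ s, ∑ y ∈ s, (a x * a y) • cm E (x - y) = (∑ x ∈ s, a x) • cm E 0 := by
  classical
  induction s using Finset.induction_on with
  | empty => simp
  | insert z s hz ih =>
    have hcancel : ∑ y ∈ s, (a z * a y) • cm E (z - y)
        + ∑ x ∈ s, ((a x * a z) • cm E (x - z)) = 0 := by
      rw [← Finset.sum_add_distrib]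
      refine Finset.sum_eq_zero fun x _ => ?_
      rw [cm_sub_comm x z, mul_comm (a x) (a z), smul_neg, add_neg_cancel]
    rw [Finset.sum_insert hz]
    simp only [Finset.sum_insert hz]
    rw [Finset.sum_add_distrib, sub_self, ih]
    have rearr : ∀ a b c d : ZEminus E, (a + b) + (c + d) = (b + c) + (a + d) := by
      intro a b c d; abel
    rw [rearr, hcancel, zero_add, sq_smul_cm_zero, ← add_smul]

/-- The biadditive pairing on divisors, `T D D' = ∑_{x,y} D(x) D'(y) [x - y]` in `ℤ[E]⁻`. -/
noncomputable def Tdiv (D D' : E →₀ ℤ) : ZEminus E :=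
  D.sum fun x n => D'.sum fun y m => (n * m) • cm E (x - y)

lemma Tdiv_diag (D : E →₀ ℤ) (hdeg : D.sum (fun _ n => n) = 0) : Tdiv D D = 0 := by
  have h : Tdiv D D = (∑ x ∈ D.support, D x) • cm E 0 := cm_key D.support (fun x => D x)
  have h2 : (∑ x ∈ D.support, D x) = 0 := hdeg
  rw [h, h2, zero_smul]

lemma Tdiv_add_left (D₁ D₂ D' : E →₀ ℤ) : Tdiv (D₁ + D₂) D' = Tdiv D₁ D' + Tdiv D₂ D' := by
  unfold Tdiv
  refine Finsupp.sum_add_index' (fun x => ?_) (fun x n₁ n₂ => ?_)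
  · simp
  · rw [← Finsupp.sum_add]
    congr 1
    funext y m
    rw [add_mul, add_smul]

lemma Tdiv_add_right (D D₁ D₂ : E →₀ ℤ) : Tdiv D (D₁ + D₂) = Tdiv D D₁ + Tdiv D D₂ := by
  unfold Tdiv
  rw [← Finsupp.sum_add]
  congr 1
  funext x n
  refine Finsupp.sum_add_index' (fun y => ?_) (fun y m₁ m₂ => ?_)
  · simp
  · rw [mul_add, add_smul]

end BetaAux

section BetaMap

variable {k E : Type*} [Field k] [IsAlgClosed k] [CharZero k] [AddCommGroup E]
variable (S : CurveSetup k E)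

/-- The pairing `b f g = ∑_{x,y} (div f)(x) (div g)(y) [x - y]` on `K^×`. -/
noncomputable def bmap (u v : Additive (S.K)ˣ) : ZEminus E :=
  Tdiv (S.div ((u.toMul : (S.K)ˣ) : S.K)) (S.div ((v.toMul : (S.K)ˣ) : S.K))

lemma bmap_add_left (u v w : Additive (S.K)ˣ) :
    bmap S (u + v) w = bmap S u w + bmap S v w := by
  unfold bmap
  have : (((u + v).toMul : (S.K)ˣ) : S.K)
      = ((u.toMul : (S.K)ˣ) : S.K) * ((v.toMul : (S.K)ˣ) : S.K) := rfl
  rw [this, S.div_mul (Units.ne_zero _) (Units.ne_zero _), Tdiv_add_left]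

lemma bmap_add_right (u v w : Additive (S.K)ˣ) :
    bmap S u (v + w) = bmap S u v + bmap S u w := by
  unfold bmap
  have : (((v + w).toMul : (S.K)ˣ) : S.K)
      = ((v.toMul : (S.K)ˣ) : S.K) * ((w.toMul : (S.K)ˣ) : S.K) := rfl
  rw [this, S.div_mul (Units.ne_zero _) (Units.ne_zero _), Tdiv_add_right]

lemma bmap_smul_left (c : ℤ) (u v : Additive (S.K)ˣ) :
    bmap S (c • u) v = c • bmap S u v :=
  map_zsmul (AddMonoidHom.mk' (fun u => bmap S u v) (fun a b => bmap_add_left S a b v)) c u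

lemma bmap_smul_right (c : ℤ) (u v : Additive (S.K)ˣ) :
    bmap S u (c • v) = c • bmap S u v :=
  map_zsmul (AddMonoidHom.mk' (fun v => bmap S u v) (fun a b => bmap_add_right S u a b)) c v

lemma bmap_diag (u : Additive (S.K)ˣ) : bmap S u u = 0 :=
  Tdiv_diag _ (S.degree_sum (Units.ne_zero _))

/-- `bmap` as an alternating map on `Fin 2`. -/
noncomputable def baltmap : (Additive (S.K)ˣ) [⋀^Fin 2]→ₗ[ℤ] ZEminus E where
  toFun v := bmap S (v 0) (v 1)
  map_update_add' := by
    intro _ m i x y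
    fin_cases i <;>
      simp [Function.update, Fin.ext_iff, bmap_add_left, bmap_add_right]
  map_update_smul' := by
    intro _ m i c x
    fin_cases i <;>
      simp [Function.update, Fin.ext_iff, bmap_smul_left, bmap_smul_right]
  map_eq_zero_of_eq' := by
    intro v i j hv hij
    fin_cases i <;> fin_cases j <;> simp_all
    all_goals exact bmap_diag S _

end BetaMap

/-- the map `β : Λ² K^× → ℤ[E]⁻`, `f ∧ g ↦ ∑_{i,j} nᵢmⱼ[xᵢ - yⱼ]` (where
`div f = ∑ nᵢ[xᵢ]`, `div g = ∑ mⱼ[yⱼ]`) is well defined: there is a `ℤ`-linear map on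
the exterior square taking each wedge `f ∧ g` to the indicated element. -/
theorem beta_well_defined (S : CurveSetup k E) :
    ∃ B : (⋀[ℤ]^2 (Additive (S.K)ˣ)) →ₗ[ℤ] ZEminus E,
      ∀ f g : (S.K)ˣ,
        B (wedge2 f g) =
          QuotientAddGroup.mk' _
            ((S.div (f : S.K)).sum fun x n =>
              (S.div (g : S.K)).sum fun y m => (n * m) • FreeAbelianGroup.of (x - y)) := by
  classical
  set F : ∀ i, (Additive (S.K)ˣ) [⋀^Fin i]→ₗ[ℤ] ZEminus E := Pi.single 2 (baltmap S) with hF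
  refine ⟨(ExteriorAlgebra.liftAlternating F).comp (Submodule.subtype _), fun f g => ?_⟩
  have h1 : (ExteriorAlgebra.liftAlternating F).comp (Submodule.subtype _) (wedge2 f g)
      = ExteriorAlgebra.liftAlternating F
          (ExteriorAlgebra.ιMulti ℤ 2 ![Additive.ofMul f, Additive.ofMul g]) := rfl
  rw [h1, ExteriorAlgebra.liftAlternating_apply_ιMulti]
  have h2 : F 2 = baltmap S := by simp [hF]
  rw [h2]
  show bmap S (Additive.ofMul f) (Additive.ofMul g) = _
  unfold bmap Tdiv
  rw [map_finsuppSum]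
  refine Finsupp.sum_congr fun x _ => ?_
  rw [map_finsuppSum]
  exact Finsupp.sum_congr fun y _ => (map_zsmul _ _ _).symm
end

section
/- Let E = ℂ/⟨1,τ⟩ and let f be a rational function on E of degree 2. Then the elliptic Bloch relation for f, namely ∑_{i,j=1}^{2} (D_τ(αᵢ - βⱼ) + D_τ(βᵢ - γⱼ) + D_τ(γᵢ - αⱼ)) = 0 where div(f) = ∑ᵢ([αᵢ]-[γᵢ]) and div(1-f) = ∑ᵢ([βᵢ]-[γᵢ]), follows from the antisymmetry relation D_τ(ξ) = -D_τ(-ξ) alone; i.e., the element ∑_{i,j}([αᵢ-βⱼ]+[βᵢ-γⱼ]+[γᵢ-αⱼ]) vanishes in ℤ[E]⁻. -/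
open Finsupp

variable {k E : Type*} [Field k] [IsAlgClosed k] [CharZero k] [AddCommGroup E]

/-- let `E = ℂ/⟨1,τ⟩` and let `f` be a rational function of degree `2` on
`E`, with `div f = [α₁]+[α₂]-[γ₁]-[γ₂]` and `div (1-f) = [β₁]+[β₂]-[γ₁]-[γ₂]`.  Then the
element `∑_{i,j=1}^{2} ([αᵢ-βⱼ]+[βᵢ-γⱼ]+[γᵢ-αⱼ])` vanishes in `ℤ[E]⁻`, i.e. the elliptic
Bloch relation for `f` follows from the antisymmetry relation alone. -/
theorem degree_two_bloch_relation_from_antisymmetry (τ : ℂ) (hτ : 0 < τ.im)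
    (S : CurveSetup ℂ (ℂ ⧸ lat τ)) (f : S.K) (hf0 : f ≠ 0) (hf1 : f ≠ 1)
    (hdeg : S.deg f = 2)
    (α₁ α₂ β₁ β₂ γ₁ γ₂ : ℂ ⧸ lat τ)
    (hdivf : S.div f = single α₁ 1 + single α₂ 1 - single γ₁ 1 - single γ₂ 1)
    (hdiv1f : S.div (1 - f) = single β₁ 1 + single β₂ 1 - single γ₁ 1 - single γ₂ 1) :
    (FreeAbelianGroup.of (α₁ - β₁) + FreeAbelianGroup.of (α₁ - β₂) +
     FreeAbelianGroup.of (α₂ - β₁) + FreeAbelianGroup.of (α₂ - β₂) +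
     FreeAbelianGroup.of (β₁ - γ₁) + FreeAbelianGroup.of (β₁ - γ₂) +
     FreeAbelianGroup.of (β₂ - γ₁) + FreeAbelianGroup.of (β₂ - γ₂) +
     FreeAbelianGroup.of (γ₁ - α₁) + FreeAbelianGroup.of (γ₁ - α₂) +
     FreeAbelianGroup.of (γ₂ - α₁) + FreeAbelianGroup.of (γ₂ - α₂)) ∈
      AddSubgroup.closure
        { r : FreeAbelianGroup (ℂ ⧸ lat τ) |
            ∃ ξ, r = FreeAbelianGroup.of ξ + FreeAbelianGroup.of (-ξ) } := by
  classical
  have h1f : (1 : S.K) - f ≠ 0 := sub_ne_zero.mpr (Ne.symm hf1)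
  have habel : ∀ (g : S.K), g ≠ 0 →
      ∀ a b c d : ℂ ⧸ lat τ,
        S.div g = single a (1:ℤ) + single b 1 - single c 1 - single d 1 →
        a + b = c + d := by
    intro g hg a b c d hdiv
    have h := S.abel_sum hg
    rw [hdiv] at h
    have hsub : ∀ (x : ℂ ⧸ lat τ) (m n : ℤ), (m - n) • x = m • x - n • x := fun x m n => by
      rw [sub_zsmul, sub_eq_add_neg]
    rw [Finsupp.sum_sub_index hsub, Finsupp.sum_sub_index hsub,
      Finsupp.sum_add_index' (fun x => zero_zsmul x) (fun x m n => add_zsmul x m n),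
      Finsupp.sum_single_index (zero_zsmul a), Finsupp.sum_single_index (zero_zsmul b),
      Finsupp.sum_single_index (zero_zsmul c), Finsupp.sum_single_index (zero_zsmul d),
      one_zsmul, one_zsmul, one_zsmul, one_zsmul] at h
    rwa [sub_sub, sub_eq_zero] at h
  have hA : α₁ + α₂ = γ₁ + γ₂ := habel f hf0 _ _ _ _ hdivf
  have hB : β₁ + β₂ = γ₁ + γ₂ := habel (1 - f) h1f _ _ _ _ hdiv1f
  have hab : α₁ + α₂ = β₁ + β₂ := hA.trans hB.symm
  have e1 : α₂ - β₂ = -(α₁ - β₁) := by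
    rw [neg_sub, sub_eq_sub_iff_add_eq_add, add_comm α₂ α₁]; exact hab
  have e2 : α₂ - β₁ = -(α₁ - β₂) := by
    rw [neg_sub, sub_eq_sub_iff_add_eq_add, add_comm α₂ α₁, add_comm β₂ β₁]; exact hab
  have e3 : β₂ - γ₂ = -(β₁ - γ₁) := by
    rw [neg_sub, sub_eq_sub_iff_add_eq_add, add_comm β₂ β₁]; exact hB
  have e4 : β₂ - γ₁ = -(β₁ - γ₂) := by
    rw [neg_sub, sub_eq_sub_iff_add_eq_add, add_comm β₂ β₁, add_comm γ₂ γ₁]; exact hB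
  have e5 : γ₂ - α₂ = -(γ₁ - α₁) := by
    rw [neg_sub, sub_eq_sub_iff_add_eq_add, add_comm γ₂ γ₁]; exact hA.symm
  have e6 : γ₂ - α₁ = -(γ₁ - α₂) := by
    rw [neg_sub, sub_eq_sub_iff_add_eq_add, add_comm γ₂ γ₁, add_comm α₂ α₁]; exact hA.symm
  have hre :
      (FreeAbelianGroup.of (α₁ - β₁) + FreeAbelianGroup.of (α₁ - β₂) +
       FreeAbelianGroup.of (α₂ - β₁) + FreeAbelianGroup.of (α₂ - β₂) +
       FreeAbelianGroup.of (β₁ - γ₁) + FreeAbelianGroup.of (β₁ - γ₂) +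
       FreeAbelianGroup.of (β₂ - γ₁) + FreeAbelianGroup.of (β₂ - γ₂) +
       FreeAbelianGroup.of (γ₁ - α₁) + FreeAbelianGroup.of (γ₁ - α₂) +
       FreeAbelianGroup.of (γ₂ - α₁) + FreeAbelianGroup.of (γ₂ - α₂)) =
      (FreeAbelianGroup.of (α₁ - β₁) + FreeAbelianGroup.of (-(α₁ - β₁))) +
      (FreeAbelianGroup.of (α₁ - β₂) + FreeAbelianGroup.of (-(α₁ - β₂))) +
      (FreeAbelianGroup.of (β₁ - γ₁) + FreeAbelianGroup.of (-(β₁ - γ₁))) +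
      (FreeAbelianGroup.of (β₁ - γ₂) + FreeAbelianGroup.of (-(β₁ - γ₂))) +
      (FreeAbelianGroup.of (γ₁ - α₁) + FreeAbelianGroup.of (-(γ₁ - α₁))) +
      (FreeAbelianGroup.of (γ₁ - α₂) + FreeAbelianGroup.of (-(γ₁ - α₂))) := by
    rw [← e1, ← e2, ← e3, ← e4, ← e5, ← e6]; abel
  rw [hre]
  refine add_mem (add_mem (add_mem (add_mem (add_mem ?_ ?_) ?_) ?_) ?_) ?_ <;>
    exact AddSubgroup.subset_closure ⟨_, rfl⟩
end
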